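/- arXiv:2602.21068 — 2 statements merged into one kernel-verified Lean document; each statement's English description precedes it below -/
import Mathlib

section
/- In a rooted tree with the stopping rule, the family-wise error rate—the probability that at least one node in a set H₀ of true-null nodes is rejected—is bounded by the sum over i ∈ H₀ of αᵢ times the product of θⱼ over proper ancestors j of i. -/
open MeasureTheory ProbabilityTheory

lemma inter_le_cond_mul {Ω : Type*} [MeasurableSpace Ω] (μ : Measure Ω)
    [IsFiniteMeasure μ] (s t : Set Ω) (hs : μ s ≠ 0) :
    μ (t ∩ s) ≤ μ[t|s] * μ s := by
  have h1 : μ (t ∩ s) ≤ μ.restrict s t := Measure.le_restrict_apply s t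
  have h2 : μ[t|s] = (μ s)⁻¹ * μ.restrict s t := rfl
  rw [h2, mul_comm ((μ s)⁻¹) _, mul_assoc, ENNReal.inv_mul_cancel hs (measure_ne_top μ s),
    mul_one]
  exact h1

lemma anc_prod_bound {Ω ι : Type*} [MeasurableSpace Ω] [Fintype ι] [DecidableEq ι]
    (μ : Measure Ω) [IsProbabilityMeasure μ]
    (anc : ι → Finset ι) (R : ι → Set Ω)
    (hirr : ∀ j, j ∉ anc j)
    (htrans : ∀ j l, j ∈ anc l → anc j ⊆ anc l)
    (hchain : ∀ i j l, j ∈ anc i → l ∈ anc i → j = l ∨ j ∈ anc l ∨ l ∈ anc j)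
    (hstop : ∀ l, R l ⊆ {ω | ∀ j ∈ anc l, ω ∈ R j})
    (hpos : ∀ j, μ {ω | ∀ l ∈ anc j, ω ∈ R l} ≠ 0) :
    ∀ n (i : ι), (anc i).card ≤ n →
      μ {ω | ∀ l ∈ anc i, ω ∈ R l} ≤
        ∏ j ∈ anc i, μ[R j | {ω | ∀ l ∈ anc j, ω ∈ R l}] := by
  intro n
  induction n with
  | zero =>
    intro i hi
    have h : anc i = ∅ := Finset.card_eq_zero.mp (Nat.le_zero.mp hi)
    simp [h, measure_univ, Set.setOf_true]
  | succ n ih =>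
    intro i hi
    rcases Finset.eq_empty_or_nonempty (anc i) with h | h
    · simp [h, measure_univ, Set.setOf_true]
    · -- pick maximal element m of anc i
      obtain ⟨m, hm, hmax⟩ := Finset.exists_max_image (anc i) (fun j => (anc j).card) h
      have hmaxm : ∀ j ∈ anc i, m ∉ anc j := by
        intro j hj hmj
        have hsub : anc m ⊆ anc j := htrans m j hmj
        have : (anc m).card < (anc j).card :=
          Finset.card_lt_card ⟨hsub, fun habs => hirr m (habs hmj)⟩
        exact absurd (hmax j hj) (not_le.mpr this)
      have heq : anc i = insert m (anc m) := by
        apply Finset.Subset.antisymm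
        · intro j hj
          rcases hchain i j m hj hm with rfl | hjm | hmj
          · exact Finset.mem_insert_self _ _
          · exact Finset.mem_insert_of_mem hjm
          · exact absurd hmj (hmaxm j hj)
        · intro j hj
          rcases Finset.mem_insert.mp hj with rfl | hj
          · exact hm
          · exact htrans m i hm hj
      have hAi : {ω | ∀ l ∈ anc i, ω ∈ R l} = R m := by
        ext ω
        constructor
        · intro hω; exact hω m hm
        · intro hω l hl
          rw [heq] at hl
          rcases Finset.mem_insert.mp hl with rfl | hl
          · exact hω
          · exact hstop m hω l hl
      have hRm : R m ⊆ {ω | ∀ l ∈ anc m, ω ∈ R l} := hstop m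
      have hcard : (anc m).card ≤ n := by
        have : (anc m).card < (anc i).card := by
          rw [heq]
          exact Nat.lt_of_lt_of_le (Nat.lt_succ_self _)
            (by rw [Finset.card_insert_of_notMem (hirr m)])
        omega
      calc μ {ω | ∀ l ∈ anc i, ω ∈ R l} = μ (R m) := by rw [hAi]
        _ = μ (R m ∩ {ω | ∀ l ∈ anc m, ω ∈ R l}) := by
            rw [Set.inter_eq_self_of_subset_left hRm]
        _ ≤ μ[R m | {ω | ∀ l ∈ anc m, ω ∈ R l}] * μ {ω | ∀ l ∈ anc m, ω ∈ R l} :=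
            inter_le_cond_mul μ _ _ (hpos m)
        _ ≤ μ[R m | {ω | ∀ l ∈ anc m, ω ∈ R l}] *
              ∏ j ∈ anc m, μ[R j | {ω | ∀ l ∈ anc j, ω ∈ R l}] :=
            mul_le_mul_right (ih m hcard) _
        _ = ∏ j ∈ anc i, μ[R j | {ω | ∀ l ∈ anc j, ω ∈ R l}] := by
            rw [heq, Finset.prod_insert (hirr m)]

/-- FWER bound for sequential tree testing: the probability that at least one
true-null node in `H₀` is rejected is bounded by the sum over `i ∈ H₀` of `αᵢ`
times the product of the conditional rejection probabilities `θⱼ` over the proper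
ancestors `j` of `i`. -/
theorem stmt_5 {Ω ι : Type*} [MeasurableSpace Ω] [Fintype ι] [DecidableEq ι]
    (μ : Measure Ω) [IsProbabilityMeasure μ]
    (anc : ι → Finset ι)         -- proper ancestors of each node
    (R : ι → Set Ω)              -- rejection events
    (H₀ : Finset ι)              -- nodes whose null hypothesis is true
    (α : ι → ENNReal)
    -- tree structure: `anc` is irreflexive, transitively closed, and the ancestors
    -- of any node form a chain
    (hirr : ∀ j, j ∉ anc j)
    (htrans : ∀ j l, j ∈ anc l → anc j ⊆ anc l)
    (hchain : ∀ i j l, j ∈ anc i → l ∈ anc i → j = l ∨ j ∈ anc l ∨ l ∈ anc j)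
    -- stopping rule: rejection of a node entails rejection of all of its ancestors
    (hstop : ∀ l, R l ⊆ {ω | ∀ j ∈ anc l, ω ∈ R j})
    -- conditioning events have positive probability
    (hpos : ∀ j, μ {ω | ∀ l ∈ anc j, ω ∈ R l} ≠ 0)
    -- valid tests at each true null
    (hsize : ∀ i ∈ H₀, μ[R i | {ω | ∀ l ∈ anc i, ω ∈ R l}] ≤ α i) :
    μ (⋃ i ∈ H₀, R i) ≤
      ∑ i ∈ H₀, α i * ∏ j ∈ anc i, μ[R j | {ω | ∀ l ∈ anc j, ω ∈ R l}] := by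
  calc μ (⋃ i ∈ H₀, R i) ≤ ∑ i ∈ H₀, μ (R i) := measure_biUnion_finset_le H₀ R
    _ ≤ ∑ i ∈ H₀, α i * ∏ j ∈ anc i, μ[R j | {ω | ∀ l ∈ anc j, ω ∈ R l}] := by
        apply Finset.sum_le_sum
        intro i hi
        calc μ (R i) = μ (R i ∩ {ω | ∀ l ∈ anc i, ω ∈ R l}) := by
              rw [Set.inter_eq_self_of_subset_left (hstop i)]
          _ ≤ μ[R i | {ω | ∀ l ∈ anc i, ω ∈ R l}] * μ {ω | ∀ l ∈ anc i, ω ∈ R l} :=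
              inter_le_cond_mul μ _ _ (hpos i)
          _ ≤ α i * ∏ j ∈ anc i, μ[R j | {ω | ∀ l ∈ anc j, ω ∈ R l}] :=
              mul_le_mul' (hsize i hi)
                (anc_prod_bound μ anc R hirr htrans hchain hstop hpos (anc i).card i le_rfl)
end

section
/- Under the adaptive adjustment α_ℓ^{adj} = α/(k^{ℓ-1} ∏_{j=1}^{ℓ-1} θ̂ⱼ) with non-underestimated powers, the total FWER upper bound from exposed nulls, ∑_{ℓ=2}^L e_ℓ · (α/k^{ℓ-1}), is at most α, where e_ℓ = k·m_{ℓ-1} - m_ℓ, m₁ ≤ 1, and m_ℓ, e_ℓ ≥ 0. -/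
open Finset

lemma tel_aux (k : ℕ) (hk : 1 ≤ k) (α : ℝ) (m : ℕ → ℕ) :
    ∀ L, 1 ≤ L →
      ∑ ℓ ∈ Icc 2 L, ((k : ℝ) * m (ℓ - 1) - m ℓ) * α / (k : ℝ) ^ (ℓ - 1)
        = α * m 1 - α * m L / (k : ℝ) ^ (L - 1) := by
  have hk0 : (k : ℝ) ≠ 0 := by positivity
  intro L
  induction L with
  | zero => omega
  | succ L ih =>
    intro _
    rcases Nat.eq_or_lt_of_le (Nat.one_le_iff_ne_zero.mpr (Nat.succ_ne_zero L)) with h | h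
    · have hL0 : L = 0 := by omega
      subst hL0; simp
    · have hL1 : 1 ≤ L := by omega
      rw [Finset.sum_Icc_succ_top (by omega : 2 ≤ L + 1), ih hL1]
      have hpow : (k : ℝ) ^ (L + 1 - 1) = (k : ℝ) ^ (L - 1) * k := by
        rw [show L + 1 - 1 = (L - 1) + 1 by omega, pow_succ]
      rw [show L + 1 - 1 = L by omega] at hpow ⊢
      have hkp : (k : ℝ) ^ (L - 1) ≠ 0 := pow_ne_zero _ hk0
      field_simp [hpow]
      rw [hpow]
      ring

/-- Under the adaptive adjustment, the total FWER upper bound from exposed nulls,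
`∑_{ℓ=2}^L e_ℓ · (α / k^{ℓ-1})` with `e_ℓ = k·m_{ℓ-1} - m_ℓ ≥ 0` and `m₁ ≤ 1`,
is at most `α`. -/
theorem stmt_10 (k L : ℕ) (hk : 1 ≤ k) (hL : 2 ≤ L)
    (α : ℝ) (hα : 0 ≤ α)
    (m : ℕ → ℕ) (hm1 : m 1 ≤ 1)
    (he : ∀ ℓ, 2 ≤ ℓ → ℓ ≤ L → m ℓ ≤ k * m (ℓ - 1)) :
    ∑ ℓ ∈ Icc 2 L, ((k : ℝ) * m (ℓ - 1) - m ℓ) * α / (k : ℝ) ^ (ℓ - 1) ≤ α := by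
  rw [tel_aux k hk α m L (by omega)]
  have h1 : (0 : ℝ) ≤ α * m L / (k : ℝ) ^ (L - 1) := by positivity
  have h2 : (m 1 : ℝ) ≤ 1 := by exact_mod_cast hm1
  nlinarith
end
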